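/- Any ortholattice that admits a strong set of quantum states is orthomodular: b ≤ a and c ≤ a' imply a∩(b∪c) = (a∩b)∪(a∩c). -/
import Mathlib


/-- An ortholattice: an algebra ⟨L, ', ∪, ∩⟩ satisfying the standard identities. -/
structure OL (L : Type*) where
  compl : L → L
  join : L → L → L
  meet : L → L → L
  join_comm : ∀ a b, join a b = join b a
  join_assoc : ∀ a b c, join (join a b) c = join a (join b c)
  compl_compl : ∀ a, compl (compl a) = a
  join_one : ∀ a b, join a (join b (compl b)) = join b (compl b)
  absorb : ∀ a b, join a (meet a b) = a
  meet_def : ∀ a b, meet a b = compl (join (compl a) (compl b))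

/-- The ordering relation on an ortholattice: a ≤ b iff a ∩ b = a. -/
def OL.le {L : Type*} (O : OL L) (a b : L) : Prop := O.meet a b = a

/-- A state on an ortholattice: m : L → [0,1] with m(1) = 1 and finite additivity
on orthogonal pairs (a ⊥ b iff a ≤ b'). -/
def OL.IsState {L : Type*} (O : OL L) (m : L → ℝ) : Prop :=
  (∀ a, 0 ≤ m a ∧ m a ≤ 1) ∧
  (∀ a, m (O.join a (O.compl a)) = 1) ∧
  (∀ a b, O.le a (O.compl b) → m (O.join a b) = m a + m b)

/-- S is a strong set of quantum states on O. -/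
def OL.IsStrongQuantum {L : Type*} (O : OL L) (S : Set (L → ℝ)) : Prop :=
  S.Nonempty ∧ (∀ m ∈ S, O.IsState m) ∧
  ∀ a b : L, ∃ m ∈ S, ((m a = 1 → m b = 1) → O.le a b)

namespace OL
variable {L : Type*} (O : OL L)

theorem one_eq (a b : L) : O.join a (O.compl a) = O.join b (O.compl b) := by
  have h1 := O.join_one (O.join a (O.compl a)) b
  have h2 := O.join_one (O.join b (O.compl b)) a
  rw [O.join_comm] at h2
  rw [← h2]; exact h1

theorem join_zero (a x : L) : O.join x (O.compl (O.join a (O.compl a))) = x := by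
  have h := O.absorb x (O.compl x)
  have hm : O.meet x (O.compl x) = O.compl (O.join x (O.compl x)) := by
    rw [O.meet_def, O.compl_compl, O.join_comm]
  rw [hm] at h
  rw [O.one_eq a x]; exact h

theorem join_idem (a : L) : O.join a a = a := by
  have hm : O.meet a (O.join a (O.compl a)) = a := by
    rw [O.meet_def]
    have h := O.join_zero a (O.compl a)
    rw [h, O.compl_compl]
  have h := O.absorb a (O.join a (O.compl a))
  rw [hm] at h; exact h

theorem meet_idem (a : L) : O.meet a a = a := by
  rw [O.meet_def, O.join_idem, O.compl_compl]

theorem meet_comm (a b : L) : O.meet a b = O.meet b a := by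
  rw [O.meet_def, O.meet_def, O.join_comm]

theorem meet_assoc (a b c : L) : O.meet (O.meet a b) c = O.meet a (O.meet b c) := by
  rw [O.meet_def a b, O.meet_def b c, O.meet_def, O.meet_def, O.compl_compl,
    O.compl_compl, O.join_assoc]

theorem compl_join (a b : L) : O.compl (O.join a b) = O.meet (O.compl a) (O.compl b) := by
  rw [O.meet_def, O.compl_compl, O.compl_compl]

theorem meet_join_self (a b : L) : O.meet a (O.join a b) = a := by
  rw [O.meet_def, O.compl_join a b, O.absorb, O.compl_compl]

theorem le_refl (a : L) : O.le a a := O.meet_idem a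

theorem join_eq_of_le {a b : L} (h : O.le a b) : O.join a b = b := by
  have h' : O.meet a b = a := h
  have habs := O.absorb b a
  rw [O.meet_comm b a, h'] at habs
  rw [O.join_comm]; exact habs

theorem le_of_join_eq {a b : L} (h : O.join a b = b) : O.le a b := by
  show O.meet a b = a
  rw [← h]
  exact O.meet_join_self a b

theorem le_trans {a b c : L} (hab : O.le a b) (hbc : O.le b c) : O.le a c := by
  have hab' : O.meet a b = a := hab
  have hbc' : O.meet b c = b := hbc
  show O.meet a c = a
  calc O.meet a c = O.meet (O.meet a b) c := by rw [hab']
    _ = O.meet a (O.meet b c) := O.meet_assoc a b c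
    _ = O.meet a b := by rw [hbc']
    _ = a := hab'

theorem le_antisymm {a b : L} (h1 : O.le a b) (h2 : O.le b a) : a = b := by
  have h1' : O.meet a b = a := h1
  have h2' : O.meet b a = b := h2
  calc a = O.meet a b := h1'.symm
    _ = O.meet b a := O.meet_comm a b
    _ = b := h2'

theorem meet_le_left (a b : L) : O.le (O.meet a b) a := by
  show O.meet (O.meet a b) a = O.meet a b
  rw [O.meet_comm, ← O.meet_assoc, O.meet_idem]

theorem meet_le_right (a b : L) : O.le (O.meet a b) b := by
  show O.meet (O.meet a b) b = O.meet a b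
  rw [O.meet_assoc, O.meet_idem]

theorem le_meet {x a b : L} (h1 : O.le x a) (h2 : O.le x b) : O.le x (O.meet a b) := by
  have h1' : O.meet x a = x := h1
  have h2' : O.meet x b = x := h2
  show O.meet x (O.meet a b) = x
  rw [← O.meet_assoc, h1', h2']

theorem le_join_left (a b : L) : O.le a (O.join a b) := O.meet_join_self a b

theorem le_join_right (a b : L) : O.le b (O.join a b) := by
  show O.meet b (O.join a b) = b
  rw [O.join_comm]
  exact O.meet_join_self b a

theorem compl_le_compl {a b : L} (h : O.le a b) : O.le (O.compl b) (O.compl a) := by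
  have hj : O.join a b = b := O.join_eq_of_le h
  show O.meet (O.compl b) (O.compl a) = O.compl b
  rw [O.meet_comm, ← O.compl_join, hj]

theorem zero_le (a x : L) : O.le (O.compl (O.join a (O.compl a))) x := by
  apply O.le_of_join_eq
  rw [O.join_comm]
  exact O.join_zero a x

theorem m_compl {m : L → ℝ} (hm : O.IsState m) (x : L) : m (O.compl x) = 1 - m x := by
  have hortho : O.le x (O.compl (O.compl x)) := by
    rw [O.compl_compl]; exact O.le_refl x
  have hadd := hm.2.2 x (O.compl x) hortho
  have h1 := hm.2.1 x
  rw [hadd] at h1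
  linarith

theorem m_mono {m : L → ℝ} (hm : O.IsState m) {x y : L} (h : O.le x y) : m x ≤ m y := by
  have h2 : O.le (O.compl y) (O.compl x) := O.compl_le_compl h
  have hadd := hm.2.2 (O.compl y) x h2
  have hb := (hm.1 (O.join (O.compl y) x)).2
  have hc := O.m_compl hm y
  rw [hadd, hc] at hb
  linarith

end OL

theorem stmt_5 {L : Type*} (O : OL L)
    (S : Set (L → ℝ)) (hS : O.IsStrongQuantum S) :
    ∀ a b c : L, O.le b a → O.le c (O.compl a) →
      O.meet a (O.join b c) = O.join (O.meet a b) (O.meet a c) := by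
  intro a b c hba hca
  -- a ≤ c'
  have hac' : O.le a (O.compl c) := by
    have h := O.compl_le_compl hca
    rw [O.compl_compl] at h
    exact h
  -- b ≤ c'
  have hbc' : O.le b (O.compl c) := O.le_trans hba hac'
  -- key: a ∩ (b ∪ c) = b
  have key : O.meet a (O.join b c) = b := by
    obtain ⟨m, hmS, hstrong⟩ := hS.2.2 (O.meet a (O.join b c)) b
    have hm := hS.2.1 m hmS
    have hle : O.le (O.meet a (O.join b c)) b := by
      apply hstrong
      intro h1
      have hma : m a = 1 := by
        have := O.m_mono hm (O.meet_le_left a (O.join b c))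
        have := (hm.1 a).2
        linarith
      have hmbc : m (O.join b c) = 1 := by
        have := O.m_mono hm (O.meet_le_right a (O.join b c))
        have := (hm.1 (O.join b c)).2
        linarith
      have hma' : m (O.compl a) = 0 := by
        rw [O.m_compl hm]; linarith
      have hmc : m c = 0 := by
        have h1 := O.m_mono hm hca
        have h2 := (hm.1 c).1
        linarith
      have hadd := hm.2.2 b c hbc'
      rw [hmbc, hmc] at hadd
      linarith
    have hge : O.le b (O.meet a (O.join b c)) :=
      O.le_meet hba (O.le_join_left b c)
    exact O.le_antisymm hle hge
  -- a ∩ b = b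
  have hab : O.meet a b = b := by
    rw [O.meet_comm]; exact hba
  -- a ∩ c = 0
  have hac : O.meet a c = O.compl (O.join a (O.compl a)) := by
    apply O.le_antisymm
    · have h1 : O.le (O.meet a c) (O.compl a) := O.le_trans (O.meet_le_right a c) hca
      have h2 : O.le (O.meet a c) (O.meet a (O.compl a)) :=
        O.le_meet (O.meet_le_left a c) h1
      have h3 : O.meet a (O.compl a) = O.compl (O.join a (O.compl a)) := by
        rw [O.meet_def, O.compl_compl, O.join_comm]
      rw [h3] at h2
      exact h2
    · exact O.zero_le a (O.meet a c)
  rw [key, hab, hac]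
  exact (O.join_zero a b).symm
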